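/- The function u(x,t) = 10 + 4·tanh(6 + 1.6·t + (4/15)·t³ − 0.4·x) solves the variable-coefficient forced Burgers equation u_t + ((2 + t²)/5)·u·u_x − (2 + t²)·u_xx = 0 for all (x,t) ∈ ℝ². (This is the vc-FBE with time-dependent nonlinear coefficient a(t) = (2 + t²)/5, time-dependent dispersive coefficient b(t) = −2 − t² and vanishing external-force term, arising from the parameter choice b1 = 0, b2(t) = −2 − t², m = 0, p = −5, q = 10, L = 4, w = 6.) -/

import Mathlib

open Real

lemma hasDerivAt_tanh_comp {g : ℝ → ℝ} {g' y : ℝ} (h : HasDerivAt g g' y) :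
    HasDerivAt (fun y => Real.tanh (g y)) (g' / Real.cosh (g y) ^ 2) y := by
  have hs := (Real.hasDerivAt_sinh (g y)).comp y h
  have hc := (Real.hasDerivAt_cosh (g y)).comp y h
  have hdiv := hs.fun_div hc (ne_of_gt (Real.cosh_pos _))
  simp only [Real.tanh_eq_sinh_div_cosh]
  refine hdiv.congr_deriv ?_
  have h1 := Real.cosh_sq_sub_sinh_sq (g y)
  have h2 : Real.cosh (g y) ≠ 0 := ne_of_gt (Real.cosh_pos _)
  simp only [Function.comp_apply]
  rw [div_left_inj' (pow_ne_zero 2 h2)]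
  linear_combination g' * h1

/-- `u(x,t) = 10 + 4·tanh(6 + 1.6·t + (4/15)·t³ − 0.4·x)` solves
`u_t + ((2 + t²)/5)·u·u_x − (2 + t²)·u_xx = 0` on all of ℝ². -/
theorem example2_solves_vcFBE :
    ∀ x t : ℝ,
      deriv (fun t' => 10 + 4 * Real.tanh (6 + 1.6 * t' + (4 / 15) * t' ^ 3 - 0.4 * x)) t
        + ((2 + t ^ 2) / 5) * (10 + 4 * Real.tanh (6 + 1.6 * t + (4 / 15) * t ^ 3 - 0.4 * x))
            * deriv (fun x' => 10 + 4 * Real.tanh (6 + 1.6 * t + (4 / 15) * t ^ 3 - 0.4 * x')) x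
        - (2 + t ^ 2) *
            deriv (deriv (fun x' => 10 + 4 * Real.tanh (6 + 1.6 * t + (4 / 15) * t ^ 3 - 0.4 * x'))) x
        = 0 := by
  intro x t
  set z : ℝ := 6 + 1.6 * t + (4 / 15) * t ^ 3 - 0.4 * x with hz
  have hczero : Real.cosh z ≠ 0 := ne_of_gt (Real.cosh_pos _)
  -- time derivative
  have hgt : HasDerivAt (fun t' : ℝ => 6 + 1.6 * t' + (4 / 15) * t' ^ 3 - 0.4 * x)
      (1.6 + (4 / 15) * (3 * t ^ 2)) t := by
    have h1 : HasDerivAt (fun t' : ℝ => t' ^ 3) (3 * t ^ 2) t := by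
      simpa using hasDerivAt_pow 3 t
    have := (((hasDerivAt_id t).const_mul (1.6 : ℝ)).const_add (6 : ℝ)).add
      (h1.const_mul ((4 : ℝ) / 15))
    simpa [mul_comm] using this.sub_const (0.4 * x)
  have hut : deriv (fun t' => 10 + 4 * Real.tanh (6 + 1.6 * t' + (4 / 15) * t' ^ 3 - 0.4 * x)) t
      = 4 * ((1.6 + (4 / 15) * (3 * t ^ 2)) / Real.cosh z ^ 2) := by
    exact (((hasDerivAt_tanh_comp hgt).const_mul 4).const_add 10).deriv
  -- space derivative, as a function of x'
  have hgx : ∀ x' : ℝ, HasDerivAt (fun x'' : ℝ => 6 + 1.6 * t + (4 / 15) * t ^ 3 - 0.4 * x'')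
      (-0.4) x' := by
    intro x'
    simpa using ((hasDerivAt_id x').const_mul (0.4 : ℝ)).const_sub
      (6 + 1.6 * t + (4 / 15) * t ^ 3)
  have hux : deriv (fun x' => 10 + 4 * Real.tanh (6 + 1.6 * t + (4 / 15) * t ^ 3 - 0.4 * x'))
      = fun x' => 4 * (-0.4) / Real.cosh (6 + 1.6 * t + (4 / 15) * t ^ 3 - 0.4 * x') ^ 2 := by
    funext x'
    rw [(((hasDerivAt_tanh_comp (hgx x')).const_mul 4).const_add 10).deriv]
    ring
  have hux1 : deriv (fun x' => 10 + 4 * Real.tanh (6 + 1.6 * t + (4 / 15) * t ^ 3 - 0.4 * x')) x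
      = 4 * (-0.4) / Real.cosh z ^ 2 := by rw [hux]
  -- second space derivative
  have hcsq : HasDerivAt
      (fun x' : ℝ => Real.cosh (6 + 1.6 * t + (4 / 15) * t ^ 3 - 0.4 * x') ^ 2)
      (2 * Real.cosh z ^ 1 * (Real.sinh z * (-0.4))) x := by
    have hc := (Real.hasDerivAt_cosh z).comp x (hgx x)
    simpa using hc.fun_pow 2
  have huxx : deriv (deriv (fun x' => 10 + 4 * Real.tanh (6 + 1.6 * t + (4 / 15) * t ^ 3 - 0.4 * x'))) x
      = (0 * Real.cosh z ^ 2 - (4 * (-0.4)) * (2 * Real.cosh z ^ 1 * (Real.sinh z * (-0.4))))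
          / (Real.cosh z ^ 2) ^ 2 := by
    rw [hux]
    have hd := (hasDerivAt_const x (4 * (-0.4) : ℝ)).div hcsq (by positivity)
    exact hd.deriv
  rw [hut, huxx, hux1, Real.tanh_eq_sinh_div_cosh]
  have h1 := Real.cosh_sq_sub_sinh_sq z
  field_simp
  ring_nf
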